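/- Let Q be a real-entried matrix of size m × n (viewed in ℂ), and let M : Matrix (Fin m) (Fin n) ℂ, U : Matrix (Fin m) (Fin r) ℂ, Y : Matrix (Fin r) (Fin n) ℂ, and d : Matrix (Fin m) (Fin r) ℂ with ‖Q ∘ (d ⬝ Y)‖_F ≠ 0. Define g = −((Q ∘ Q) ∘ (M − U ⬝ Y)) ⬝ Yᴴ and γ = Re⟨g, d⟩_F. Then μ* = γ / ‖Q ∘ (d ⬝ Y)‖_F² is the unique real minimizer of the function μ ↦ ‖Q ∘ (M − (U − μ • d) ⬝ Y)‖_F², i.e., for all μ ∈ ℝ, ‖Q ∘ (M − (U − μ* • d) ⬝ Y)‖_F² ≤ ‖Q ∘ (M − (U − μ • d) ⬝ Y)‖_F², with equality only when μ = μ*. -/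

import Mathlib

open Finset Matrix

/-- Frobenius norm of a complex matrix. -/
noncomputable def frobNorm {m n : Type*} [Fintype m] [Fintype n]
    (A : Matrix m n ℂ) : ℝ :=
  Real.sqrt (∑ i, ∑ j, ‖A i j‖ ^ 2)

/-- Frobenius inner product of complex matrices. -/
noncomputable def frobInner {m n : Type*} [Fintype m] [Fintype n]
    (A B : Matrix m n ℂ) : ℂ :=
  ∑ i, ∑ j, starRingEnd ℂ (A i j) * B i j

lemma frobNorm_sq' {m n : Type*} [Fintype m] [Fintype n] (A : Matrix m n ℂ) :
    frobNorm A ^ 2 = ∑ i, ∑ j, Complex.normSq (A i j) := by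
  rw [frobNorm, Real.sq_sqrt]
  · simp [Complex.sq_norm]
  · positivity

lemma gd_eq' {m n r : ℕ} (Q M : Matrix (Fin m) (Fin n) ℂ)
    (Y : Matrix (Fin r) (Fin n) ℂ) (d : Matrix (Fin m) (Fin r) ℂ)
    (hQc : ∀ i j, starRingEnd ℂ (Q i j) = Q i j) :
    frobInner (-(((Q ⊙ Q) ⊙ M) * Yᴴ)) d = -frobInner (Q ⊙ M) (Q ⊙ (d * Y)) := by
  unfold frobInner
  simp only [Matrix.neg_apply, Matrix.mul_apply, Matrix.hadamard_apply,
    Matrix.conjTranspose_apply, map_sum, _root_.map_mul, map_neg, hQc,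
    ← starRingEnd_apply, Complex.conj_conj,
    Finset.sum_mul, Finset.mul_sum, neg_mul, Finset.sum_neg_distrib]
  rw [neg_inj]
  refine Finset.sum_congr rfl fun i _ => ?_
  rw [Finset.sum_comm]
  refine Finset.sum_congr rfl fun j _ => Finset.sum_congr rfl fun k _ => ?_
  ring

/-- The exact line-search step size `μ* = γ / ‖Q ∘ (d⬝Y)‖²` is the unique real
minimizer of `μ ↦ ‖Q ∘ (M − (U − μ•d)⬝Y)‖²`. -/
theorem linesearch_unique_minimizer {m n r : ℕ}
    (Q : Matrix (Fin m) (Fin n) ℂ) (hQ : ∀ i j, (Q i j).im = 0)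
    (M : Matrix (Fin m) (Fin n) ℂ) (U : Matrix (Fin m) (Fin r) ℂ)
    (Y : Matrix (Fin r) (Fin n) ℂ)
    (d : Matrix (Fin m) (Fin r) ℂ)
    (hd : frobNorm (Q ⊙ (d * Y)) ≠ 0)
    (g : Matrix (Fin m) (Fin r) ℂ)
    (hg : g = -(((Q ⊙ Q) ⊙ (M - U * Y)) * Yᴴ))
    (γ : ℝ) (hγ : γ = (frobInner g d).re)
    (μstar : ℝ) (hμstar : μstar = γ / frobNorm (Q ⊙ (d * Y)) ^ 2) :
    ∀ μ : ℝ,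
      frobNorm (Q ⊙ (M - (U - (μstar : ℂ) • d) * Y)) ^ 2 ≤
        frobNorm (Q ⊙ (M - (U - (μ : ℂ) • d) * Y)) ^ 2 ∧
      (frobNorm (Q ⊙ (M - (U - (μstar : ℂ) • d) * Y)) ^ 2 =
        frobNorm (Q ⊙ (M - (U - (μ : ℂ) • d) * Y)) ^ 2 → μ = μstar) := by
  have hQc : ∀ i j, starRingEnd ℂ (Q i j) = Q i j :=
    fun i j => Complex.conj_eq_iff_im.2 (hQ i j)
  set R : Matrix (Fin m) (Fin n) ℂ := Q ⊙ (M - U * Y) with hR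
  set B : Matrix (Fin m) (Fin n) ℂ := Q ⊙ (d * Y) with hB
  set a : ℝ := ∑ i, ∑ j, Complex.normSq (B i j) with ha
  set c : ℝ := ∑ i, ∑ j, Complex.normSq (R i j) with hc
  set b : ℝ := ∑ i, ∑ j, (R i j * starRingEnd ℂ (B i j)).re with hb
  -- positivity of a
  have haB : a = frobNorm B ^ 2 := (frobNorm_sq' B).symm
  have hapos : 0 < a := by
    rw [haB]
    have h0 : 0 ≤ frobNorm B := Real.sqrt_nonneg _
    exact pow_pos (lt_of_le_of_ne h0 (Ne.symm hd)) 2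
  -- γ = -b
  have hzw : ∀ z w : ℂ, (starRingEnd ℂ z * w).re = (z * starRingEnd ℂ w).re := by
    intro z w
    simp [Complex.mul_re]
  have hγb : γ = -b := by
    rw [hγ, hg, gd_eq' Q (M - U * Y) Y d hQc]
    rw [Complex.neg_re, hb]
    congr 1
    unfold frobInner
    rw [Complex.re_sum]
    refine Finset.sum_congr rfl fun i _ => ?_
    rw [Complex.re_sum]
    exact Finset.sum_congr rfl fun j _ => hzw _ _
  -- pointwise entry expression
  have hentry : ∀ (μ : ℝ) i j, (Q ⊙ (M - (U - (μ : ℂ) • d) * Y)) i j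
      = R i j + (μ : ℂ) * B i j := by
    intro μ i j
    simp only [hR, hB, Matrix.hadamard_apply, Matrix.sub_apply, Matrix.mul_apply,
      Matrix.smul_apply, smul_eq_mul, sub_mul, Finset.mul_sum]
    rw [Finset.sum_sub_distrib]
    have hpull : (∑ k, (μ : ℂ) * (Q i j * (d i k * Y k j)))
        = Q i j * ∑ k, (μ : ℂ) * d i k * Y k j := by
      rw [Finset.mul_sum]
      exact Finset.sum_congr rfl fun k _ => by ring
    rw [hpull]
    ring
  -- quadratic expansion
  have hexp : ∀ μ : ℝ, frobNorm (Q ⊙ (M - (U - (μ : ℂ) • d) * Y)) ^ 2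
      = c + 2 * b * μ + a * μ ^ 2 := by
    intro μ
    rw [frobNorm_sq']
    have key : ∀ i j, Complex.normSq ((Q ⊙ (M - (U - (μ : ℂ) • d) * Y)) i j)
        = Complex.normSq (R i j)
          + μ * (2 * (R i j * starRingEnd ℂ (B i j)).re)
          + μ ^ 2 * Complex.normSq (B i j) := by
      intro i j
      rw [hentry μ i j]
      simp [Complex.normSq_apply, Complex.add_re, Complex.add_im, Complex.mul_re,
        Complex.mul_im]
      ring
    simp only [key, Finset.sum_add_distrib, ← Finset.mul_sum]
    rw [← hc, ← hb, ← ha]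
    ring
  intro μ
  have hms : a * μstar = -b := by
    rw [hμstar, hγb, ← haB]
    field_simp
  have key2 : c + 2 * b * μstar + a * μstar ^ 2 + a * (μ - μstar) ^ 2
      = c + 2 * b * μ + a * μ ^ 2 := by
    linear_combination (2 * (μstar - μ)) * hms
  constructor
  · rw [hexp, hexp]
    nlinarith [key2, mul_nonneg hapos.le (sq_nonneg (μ - μstar))]
  · intro heq
    rw [hexp, hexp] at heq
    have h2 : a * (μ - μstar) ^ 2 = 0 := by linarith
    have h3 : (μ - μstar) ^ 2 = 0 := by
      rcases mul_eq_zero.1 h2 with h | h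
      · exact absurd h (ne_of_gt hapos)
      · exact h
    have := pow_eq_zero_iff (n := 2) (by norm_num) |>.1 h3
    linarith [sub_eq_zero.1 this]
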